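/- arXiv:1910.12772 — 2 statements merged into one kernel-verified Lean document; each statement's English description precedes it below -/
import Mathlib

section
/- Assume additionally that f_D ≥ 0 on [0,y₁]. Then f_D(y) → ∞ as y → ∞, and the limit ψ(λ) := lim_{y→∞} f_N(y)/f_D(y) exists and equals (λ ∫_{[0,y₁]} f_N(z) m̂(dz)) / (1 + λ ∫_{[0,y₁]} f_D(z) m̂(dz)). -/
open MeasureTheory Filter Topology Set
open scoped ENNReal

section Aux

variable {y₁ : ℝ} {mhat : Measure ℝ}

lemma aux_meas_lt_top (hsupp : mhat (Ioi y₁) = 0)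
    (hfin : mhat (Icc (0:ℝ) y₁) < ⊤) (t : ℝ) : mhat (Icc 0 t) < ⊤ := by
  calc mhat (Icc 0 t) ≤ mhat (Icc 0 y₁ ∪ Ioi y₁) := by
        refine measure_mono (fun x hx => ?_)
        rcases le_or_gt x y₁ with h | h
        · exact Or.inl ⟨hx.1, h⟩
        · exact Or.inr h
    _ ≤ mhat (Icc 0 y₁) + mhat (Ioi y₁) := measure_union_le _ _
    _ < ⊤ := by rw [hsupp]; simpa using hfin

lemma aux_ae_eq (hsupp : mhat (Ioi y₁) = 0) {y : ℝ} (hy : y₁ ≤ y) :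
    (Icc (0:ℝ) y : Set ℝ) =ᵐ[mhat] Icc (0:ℝ) y₁ := by
  rw [ae_eq_set]
  constructor
  · refine measure_mono_null (fun x hx => ?_) hsupp
    rcases hx with ⟨⟨hx0, hxy⟩, hx2⟩
    simp only [mem_Icc, not_and, not_le] at hx2
    exact hx2 hx0
  · refine measure_mono_null (fun x hx => ?_) hsupp
    rcases hx with ⟨⟨hx0, hxy⟩, hx2⟩
    exact absurd ⟨hx0, hxy.trans hy⟩ hx2

lemma aux_intOn {f : ℝ → ℝ} (hfc : ContinuousOn f (Ici (0:ℝ)))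
    (hsupp : mhat (Ioi y₁) = 0) (hfin : mhat (Icc (0:ℝ) y₁) < ⊤) (t : ℝ) :
    IntegrableOn f (Icc 0 t) mhat := by
  rcases lt_or_ge t 0 with h | h
  · simp [Icc_eq_empty_of_lt h]
  · have hc : ContinuousOn f (Icc 0 t) := hfc.mono (fun x hx => hx.1)
    obtain ⟨M, hM⟩ := (isCompact_Icc (a := (0:ℝ)) (b := t)).exists_bound_of_continuousOn hc
    refine ⟨hc.aestronglyMeasurable measurableSet_Icc, ?_⟩
    exact HasFiniteIntegral.restrict_of_bounded (C := M) (aux_meas_lt_top hsupp hfin t)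
      (ae_restrict_of_forall_mem measurableSet_Icc hM)

/-- Measurability of `t ↦ ∫_{[0,t]} f dm̂`. -/
lemma aux_g_meas {f : ℝ → ℝ} (hfc : ContinuousOn f (Ici (0:ℝ)))
    (hsupp : mhat (Ioi y₁) = 0) (hfin : mhat (Icc (0:ℝ) y₁) < ⊤) :
    Measurable (fun t : ℝ => ∫ z in Icc (0:ℝ) t, f z ∂mhat) := by
  set fp : ℝ → ℝ := fun z => max (f z) 0 with hfp
  set fm : ℝ → ℝ := fun z => max (-f z) 0 with hfm
  have hfpc : ContinuousOn fp (Ici (0:ℝ)) := by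
    show ContinuousOn (fun z => f z ⊔ 0) (Ici (0:ℝ))
    exact hfc.sup continuousOn_const
  have hfmc : ContinuousOn fm (Ici (0:ℝ)) := by
    show ContinuousOn (fun z => -f z ⊔ 0) (Ici (0:ℝ))
    exact hfc.neg.sup continuousOn_const
  have hmono : ∀ (g : ℝ → ℝ), ContinuousOn g (Ici (0:ℝ)) → (∀ z, 0 ≤ g z) →
      Monotone (fun t : ℝ => ∫ z in Icc (0:ℝ) t, g z ∂mhat) := by
    intro g hgc hg0 s t hst
    refine setIntegral_mono_set (aux_intOn hgc hsupp hfin t)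
      (ae_of_all _ hg0) (HasSubset.Subset.eventuallyLE (Icc_subset_Icc_right hst))
  have heq : (fun t : ℝ => ∫ z in Icc (0:ℝ) t, f z ∂mhat)
      = fun t : ℝ => (∫ z in Icc (0:ℝ) t, fp z ∂mhat) - ∫ z in Icc (0:ℝ) t, fm z ∂mhat := by
    funext t
    rw [← integral_sub (aux_intOn hfpc hsupp hfin t) (aux_intOn hfmc hsupp hfin t)]
    refine setIntegral_congr_fun measurableSet_Icc (fun z _ => ?_)
    simp only [fp, fm]
    rcases le_total (f z) 0 with h | h
    · rw [max_eq_right h, max_eq_left (by linarith)]; ring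
    · rw [max_eq_left h, max_eq_right (by linarith)]; ring
  rw [heq]
  exact ((hmono fp hfpc (fun z => le_max_right _ _)).measurable).sub
    ((hmono fm hfmc (fun z => le_max_right _ _)).measurable)

/-- Interval integrability of `t ↦ ∫_{[0,t]} f dm̂` on `[a,b] ⊆ [0,∞)`. -/
lemma aux_g_intInt {f : ℝ → ℝ} (hfc : ContinuousOn f (Ici (0:ℝ)))
    (hsupp : mhat (Ioi y₁) = 0) (hfin : mhat (Icc (0:ℝ) y₁) < ⊤) {Y : ℝ} (hY : 0 ≤ Y) :
    IntervalIntegrable (fun t : ℝ => ∫ z in Icc (0:ℝ) t, f z ∂mhat) volume 0 Y := by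
  have hnc : ContinuousOn (fun z => ‖f z‖) (Ici (0:ℝ)) := hfc.norm
  rw [intervalIntegrable_iff, uIoc_of_le hY]
  refine ⟨((aux_g_meas hfc hsupp hfin).aestronglyMeasurable).restrict, ?_⟩
  refine HasFiniteIntegral.restrict_of_bounded (C := ∫ z in Icc (0:ℝ) Y, ‖f z‖ ∂mhat)
    (by simp) ?_
  refine ae_restrict_of_forall_mem measurableSet_Ioc (fun t ht => ?_)
  calc ‖∫ z in Icc (0:ℝ) t, f z ∂mhat‖ ≤ ∫ z in Icc (0:ℝ) t, ‖f z‖ ∂mhat :=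
        norm_integral_le_integral_norm _
    _ ≤ ∫ z in Icc (0:ℝ) Y, ‖f z‖ ∂mhat :=
        setIntegral_mono_set (aux_intOn hnc hsupp hfin Y) (ae_of_all _ (fun z => norm_nonneg _))
          (HasSubset.Subset.eventuallyLE (Icc_subset_Icc_right ht.2))

/-- Splitting: for `y ≥ y₁ ≥ 0`,
`∫_0^y g = ∫_0^{y₁} g + (y - y₁) * ∫_{[0,y₁]} f dm̂`. -/
lemma aux_split {f : ℝ → ℝ} (hfc : ContinuousOn f (Ici (0:ℝ))) (hy₁ : 0 < y₁)
    (hsupp : mhat (Ioi y₁) = 0) (hfin : mhat (Icc (0:ℝ) y₁) < ⊤) {y : ℝ} (hy : y₁ ≤ y) :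
    (∫ y' in (0:ℝ)..y, ∫ z in Icc (0:ℝ) y', f z ∂mhat)
      = (∫ y' in (0:ℝ)..y₁, ∫ z in Icc (0:ℝ) y', f z ∂mhat)
        + (y - y₁) * ∫ z in Icc (0:ℝ) y₁, f z ∂mhat := by
  have hy0 : (0:ℝ) ≤ y := hy₁.le.trans hy
  have h1 : IntervalIntegrable (fun t : ℝ => ∫ z in Icc (0:ℝ) t, f z ∂mhat) volume 0 y₁ :=
    aux_g_intInt hfc hsupp hfin hy₁.le
  have h2 : IntervalIntegrable (fun t : ℝ => ∫ z in Icc (0:ℝ) t, f z ∂mhat) volume y₁ y := by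
    refine (aux_g_intInt hfc hsupp hfin hy0).mono_set ?_
    rw [uIcc_of_le hy, uIcc_of_le hy0]
    exact Icc_subset_Icc_left hy₁.le
  rw [← intervalIntegral.integral_add_adjacent_intervals h1 h2]
  congr 1
  have : (∫ y' in y₁..y, ∫ z in Icc (0:ℝ) y', f z ∂mhat)
      = ∫ _ in y₁..y, (∫ z in Icc (0:ℝ) y₁, f z ∂mhat) := by
    refine intervalIntegral.integral_congr (fun x hx => ?_)
    rw [uIcc_of_le hy] at hx
    exact setIntegral_congr_set (aux_ae_eq hsupp hx.1)
  rw [this, intervalIntegral.integral_const, smul_eq_mul]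

end Aux

/-- if in addition `f_D ≥ 0` on `[0,y₁]`, then `f_D(y) → ∞` as `y → ∞`
and `ψ(λ) := lim_{y→∞} f_N(y)/f_D(y)` exists and equals
`(λ ∫_{[0,y₁]} f_N dm̂) / (1 + λ ∫_{[0,y₁]} f_D dm̂)`. -/
theorem statement12 (y₁ : ℝ) (hy₁ : 0 < y₁)
    (mhat : Measure ℝ)
    (hsupp : mhat (Ioi y₁) = 0) (hfin : mhat (Icc (0:ℝ) y₁) < ⊤)
    (lam : ℝ) (hlam : 0 < lam)
    (fN fD : ℝ → ℝ)
    (hfNc : ContinuousOn fN (Ici (0:ℝ))) (hfDc : ContinuousOn fD (Ici (0:ℝ)))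
    (hfN : ∀ y : ℝ, 0 ≤ y →
      fN y = 1 + lam * ∫ y' in (0:ℝ)..y, (∫ z in Icc (0:ℝ) y', fN z ∂mhat))
    (hfD : ∀ y : ℝ, 0 ≤ y →
      fD y = y + lam * ∫ y' in (0:ℝ)..y, (∫ z in Icc (0:ℝ) y', fD z ∂mhat))
    (hfDpos : ∀ z ∈ Icc (0:ℝ) y₁, 0 ≤ fD z) :
    Tendsto fD atTop atTop ∧
    Tendsto (fun y => fN y / fD y) atTop
      (𝓝 ((lam * ∫ z in Icc (0:ℝ) y₁, fN z ∂mhat)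
          / (1 + lam * ∫ z in Icc (0:ℝ) y₁, fD z ∂mhat))) := by
  set CN : ℝ := ∫ z in Icc (0:ℝ) y₁, fN z ∂mhat with hCN
  set CD : ℝ := ∫ z in Icc (0:ℝ) y₁, fD z ∂mhat with hCD
  have hCD0 : 0 ≤ CD := setIntegral_nonneg measurableSet_Icc hfDpos
  set a : ℝ := 1 + lam * CD with ha
  have ha0 : 0 < a := by positivity
  -- affine formulas for y ≥ y₁
  have hfN' : ∀ y, y₁ ≤ y → fN y = fN y₁ + (y - y₁) * (lam * CN) := by
    intro y hy
    rw [hfN y (hy₁.le.trans hy), hfN y₁ hy₁.le, aux_split hfNc hy₁ hsupp hfin hy]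
    ring
  have hfD' : ∀ y, y₁ ≤ y → fD y = fD y₁ + (y - y₁) * a := by
    intro y hy
    rw [hfD y (hy₁.le.trans hy), hfD y₁ hy₁.le, aux_split hfDc hy₁ hsupp hfin hy, ha]
    ring
  have hsub : Tendsto (fun y : ℝ => y - y₁) atTop atTop :=
    tendsto_atTop_add_const_right _ _ tendsto_id
  constructor
  · have h1 : Tendsto (fun y : ℝ => fD y₁ + (y - y₁) * a) atTop atTop :=
      tendsto_atTop_add_const_left _ _ (hsub.atTop_mul_const ha0)
    refine h1.congr' ?_
    filter_upwards [eventually_ge_atTop y₁] with y hy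
    exact (hfD' y hy).symm
  · have hnum : Tendsto (fun y : ℝ => fN y₁ / (y - y₁) + lam * CN) atTop (𝓝 (lam * CN)) := by
      have := (tendsto_const_nhds (x := fN y₁) (f := atTop (α := ℝ))).div_atTop hsub
      simpa using this.add_const (lam * CN)
    have hden : Tendsto (fun y : ℝ => fD y₁ / (y - y₁) + a) atTop (𝓝 a) := by
      have := (tendsto_const_nhds (x := fD y₁) (f := atTop (α := ℝ))).div_atTop hsub
      simpa using this.add_const a
    have hlim : Tendsto (fun y : ℝ => (fN y₁ / (y - y₁) + lam * CN) / (fD y₁ / (y - y₁) + a))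
        atTop (𝓝 (lam * CN / a)) := by
      have := hnum.div hden ha0.ne'
      exact this
    have : Tendsto (fun y => fN y / fD y) atTop (𝓝 (lam * CN / a)) := by
      refine hlim.congr' ?_
      filter_upwards [eventually_gt_atTop y₁] with y hy
      have ht : y - y₁ ≠ 0 := by linarith [hy]
      rw [hfN' y hy.le, hfD' y hy.le]
      rw [div_add' _ _ _ ht, div_add' _ _ _ ht, div_div_div_cancel_right₀]
      · ring_nf
      · exact ht
    simpa [ha] using this
end

section
/- Assume additionally that f_D ≥ 0 on [0,y₁], set ψ(λ) = (λ ∫_{[0,y₁]} f_N(z) m̂(dz)) / (1 + λ ∫_{[0,y₁]} f_D(z) m̂(dz)), φ = f_N − ψ(λ)·f_D, and m₁ = m̂({y₁}). Then ψ(λ) = λ ∫_{[0,y₁]} φ(z) m̂(dz), and the right derivative of φ satisfies lim_{y↑y₁} ∂_y⁺φ(y) = −λ·m₁·φ(y₁). -/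
open MeasureTheory Filter Topology Set
open scoped ENNReal

private lemma subset_union_aux (y₁ u : ℝ) : Icc (0:ℝ) u ⊆ Icc (0:ℝ) y₁ ∪ Ioi y₁ := by
  intro z hz
  rcases le_or_gt z y₁ with h | h
  · exact Or.inl ⟨hz.1, h⟩
  · exact Or.inr h

private lemma intOn_union {y₁ : ℝ} {mhat : Measure ℝ}
    (hsupp : mhat (Ioi y₁) = 0) (hfin : mhat (Icc (0:ℝ) y₁) < ⊤)
    {f : ℝ → ℝ} (hfc : ContinuousOn f (Ici (0:ℝ))) :
    IntegrableOn f (Icc (0:ℝ) y₁ ∪ Ioi y₁) mhat := by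
  apply IntegrableOn.union
  · obtain ⟨C, hC⟩ := (isCompact_Icc (a := (0:ℝ)) (b := y₁)).exists_bound_of_continuousOn
      (hfc.mono (fun z hz => hz.1))
    exact ⟨(hfc.mono (fun z hz => hz.1)).aestronglyMeasurable measurableSet_Icc,
      HasFiniteIntegral.restrict_of_bounded C hfin
        ((ae_restrict_iff' measurableSet_Icc).2 (ae_of_all _ fun z hz => hC z hz))⟩
  · rw [IntegrableOn, Measure.restrict_eq_zero.2 hsupp]
    exact integrable_zero_measure

private lemma g_props {y₁ : ℝ} {mhat : Measure ℝ} {f : ℝ → ℝ}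
    (hU : IntegrableOn f (Icc (0:ℝ) y₁ ∪ Ioi y₁) mhat) :
    Measurable (fun u => ∫ z in Icc (0:ℝ) u, f z ∂mhat) ∧
    ∀ a b : ℝ, IntervalIntegrable (fun u => ∫ z in Icc (0:ℝ) u, f z ∂mhat) volume a b := by
  have hint : ∀ u, IntegrableOn f (Icc (0:ℝ) u) mhat :=
    fun u => hU.mono_set (subset_union_aux y₁ u)
  set p : ℝ → ℝ := fun u => ∫ z in Icc (0:ℝ) u, max (f z) 0 ∂mhat with hp_def
  set q : ℝ → ℝ := fun u => ∫ z in Icc (0:ℝ) u, max (-f z) 0 ∂mhat with hq_def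
  have hp : Monotone p := fun u v huv =>
    setIntegral_mono_set (hint v).pos_part (ae_of_all _ fun z => le_max_right _ _)
      (HasSubset.Subset.eventuallyLE (Icc_subset_Icc_right huv))
  have hq : Monotone q := fun u v huv =>
    setIntegral_mono_set (hint v).neg_part (ae_of_all _ fun z => le_max_right _ _)
      (HasSubset.Subset.eventuallyLE (Icc_subset_Icc_right huv))
  have hg_eq : (fun u => ∫ z in Icc (0:ℝ) u, f z ∂mhat) = fun u => p u - q u := by
    funext u
    rw [hp_def, hq_def]
    simp only
    rw [← integral_sub (hint u).pos_part (hint u).neg_part]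
    exact integral_congr_ae (ae_of_all _ fun z => (max_zero_sub_max_neg_zero_eq_self (f z)).symm)
  rw [hg_eq]
  exact ⟨(hp.measurable).sub hq.measurable,
    fun a b => (hp.intervalIntegrable).sub hq.intervalIntegrable⟩

private lemma tendsto_setIntegral_aux {y₁ : ℝ} {mhat : Measure ℝ} {f : ℝ → ℝ}
    (hU : IntegrableOn f (Icc (0:ℝ) y₁ ∪ Ioi y₁) mhat)
    {l : Filter ℝ} [l.IsCountablyGenerated] {S : Set ℝ} (hS : MeasurableSet S)
    (hptw : ∀ z, Tendsto (fun u => (Icc (0:ℝ) u).indicator f z) l (𝓝 (S.indicator f z))) :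
    Tendsto (fun u => ∫ z in Icc (0:ℝ) u, f z ∂mhat) l (𝓝 (∫ z in S, f z ∂mhat)) := by
  have hint : ∀ u, IntegrableOn f (Icc (0:ℝ) u) mhat :=
    fun u => hU.mono_set (subset_union_aux y₁ u)
  have hmU : MeasurableSet (Icc (0:ℝ) y₁ ∪ Ioi y₁) := measurableSet_Icc.union measurableSet_Ioi
  have hbound : ∀ u : ℝ, ∀ z : ℝ, ‖(Icc (0:ℝ) u).indicator f z‖ ≤
      (Icc (0:ℝ) y₁ ∪ Ioi y₁).indicator (fun z => ‖f z‖) z := by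
    intro u z
    by_cases hz : z ∈ Icc (0:ℝ) u
    · rw [indicator_of_mem hz, indicator_of_mem (subset_union_aux y₁ u hz)]
    · rw [indicator_of_notMem hz, norm_zero]
      exact indicator_nonneg (fun z _ => norm_nonneg _) z
  have h := tendsto_integral_filter_of_dominated_convergence
    (μ := mhat) (F := fun u z => (Icc (0:ℝ) u).indicator f z) (f := S.indicator f)
    ((Icc (0:ℝ) y₁ ∪ Ioi y₁).indicator (fun z => ‖f z‖))
    (Eventually.of_forall fun u =>
      (aestronglyMeasurable_indicator_iff measurableSet_Icc).2 (hint u).aestronglyMeasurable)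
    (Eventually.of_forall fun u => ae_of_all _ fun z => hbound u z)
    ((integrable_indicator_iff hmU).2 hU.norm)
    (ae_of_all _ hptw)
  simpa only [integral_indicator measurableSet_Icc, integral_indicator hS] using h

/-- with `ψ(λ) = (λ ∫_{[0,y₁]} f_N dm̂)/(1 + λ ∫_{[0,y₁]} f_D dm̂)`,
`φ = f_N − ψ(λ)·f_D` and `m₁ = m̂({y₁})`, one has `ψ(λ) = λ ∫_{[0,y₁]} φ dm̂`, and the
right derivative of `φ` satisfies `lim_{y↑y₁} ∂_y⁺φ(y) = −λ·m₁·φ(y₁)`. -/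
theorem statement13 (y₁ : ℝ) (hy₁ : 0 < y₁)
    (mhat : Measure ℝ)
    (hsupp : mhat (Ioi y₁) = 0) (hfin : mhat (Icc (0:ℝ) y₁) < ⊤)
    (lam : ℝ) (hlam : 0 < lam)
    (fN fD : ℝ → ℝ)
    (hfNc : ContinuousOn fN (Ici (0:ℝ))) (hfDc : ContinuousOn fD (Ici (0:ℝ)))
    (hfN : ∀ y : ℝ, 0 ≤ y →
      fN y = 1 + lam * ∫ y' in (0:ℝ)..y, (∫ z in Icc (0:ℝ) y', fN z ∂mhat))
    (hfD : ∀ y : ℝ, 0 ≤ y →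
      fD y = y + lam * ∫ y' in (0:ℝ)..y, (∫ z in Icc (0:ℝ) y', fD z ∂mhat))
    (hfDpos : ∀ z ∈ Icc (0:ℝ) y₁, 0 ≤ fD z)
    (ψlam : ℝ)
    (hψlam : ψlam = (lam * ∫ z in Icc (0:ℝ) y₁, fN z ∂mhat)
        / (1 + lam * ∫ z in Icc (0:ℝ) y₁, fD z ∂mhat))
    (φ : ℝ → ℝ) (hφ : ∀ y : ℝ, φ y = fN y - ψlam * fD y)
    (m₁ : ℝ) (hm₁ : m₁ = (mhat {y₁}).toReal) :
    ψlam = lam * ∫ z in Icc (0:ℝ) y₁, φ z ∂mhat ∧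
    ∀ φ' : ℝ → ℝ, (∀ y : ℝ, 0 ≤ y → HasDerivWithinAt φ (φ' y) (Ioi y) y) →
      Tendsto φ' (𝓝[<] y₁) (𝓝 (-(lam * m₁ * φ y₁))) := by
  have hφfun : φ = fun y => fN y - ψlam * fD y := funext hφ
  have hφc : ContinuousOn φ (Ici (0:ℝ)) := by
    rw [hφfun]; exact hfNc.sub (continuousOn_const.mul hfDc)
  have hUN : IntegrableOn fN (Icc (0:ℝ) y₁ ∪ Ioi y₁) mhat := intOn_union hsupp hfin hfNc
  have hUD : IntegrableOn fD (Icc (0:ℝ) y₁ ∪ Ioi y₁) mhat := intOn_union hsupp hfin hfDc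
  have hUφ : IntegrableOn φ (Icc (0:ℝ) y₁ ∪ Ioi y₁) mhat := intOn_union hsupp hfin hφc
  have hintN : ∀ u, IntegrableOn fN (Icc (0:ℝ) u) mhat :=
    fun u => hUN.mono_set (subset_union_aux y₁ u)
  have hintD : ∀ u, IntegrableOn fD (Icc (0:ℝ) u) mhat :=
    fun u => hUD.mono_set (subset_union_aux y₁ u)
  have hintφ : ∀ u, IntegrableOn φ (Icc (0:ℝ) u) mhat :=
    fun u => hUφ.mono_set (subset_union_aux y₁ u)
  set IN : ℝ := ∫ z in Icc (0:ℝ) y₁, fN z ∂mhat with hIN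
  set ID : ℝ := ∫ z in Icc (0:ℝ) y₁, fD z ∂mhat with hID
  have hIDnn : 0 ≤ ID := setIntegral_nonneg measurableSet_Icc hfDpos
  have hDpos : (0:ℝ) < 1 + lam * ID := by nlinarith [mul_nonneg hlam.le hIDnn]
  have hψeq : ψlam * (1 + lam * ID) = lam * IN := by
    rw [hψlam]; field_simp
  have hgsum : ∀ t : ℝ, (∫ z in Icc (0:ℝ) t, φ z ∂mhat) =
      (∫ z in Icc (0:ℝ) t, fN z ∂mhat) - ψlam * ∫ z in Icc (0:ℝ) t, fD z ∂mhat := by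
    intro t
    rw [hφfun]
    rw [integral_sub (hintN t) ((hintD t).const_mul ψlam), integral_const_mul]
  have part1 : ψlam = lam * ∫ z in Icc (0:ℝ) y₁, φ z ∂mhat := by
    rw [hgsum y₁]
    linear_combination hψeq
  refine ⟨part1, ?_⟩
  intro φ' hφ'd
  set g : ℝ → ℝ := fun u => ∫ z in Icc (0:ℝ) u, φ z ∂mhat with hg
  obtain ⟨hgmeas, hgII⟩ := g_props hUφ
  obtain ⟨_, hNII⟩ := g_props hUN
  obtain ⟨_, hDII⟩ := g_props hUD
  -- pointwise indicator convergence, right limits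
  have hptwR : ∀ y : ℝ, ∀ z : ℝ, Tendsto (fun u => (Icc (0:ℝ) u).indicator φ z) (𝓝[>] y)
      (𝓝 ((Icc (0:ℝ) y).indicator φ z)) := by
    intro y z
    by_cases hz : z ∈ Icc (0:ℝ) y
    · rw [indicator_of_mem hz]
      apply tendsto_const_nhds.congr'
      filter_upwards [self_mem_nhdsWithin] with u hu
      have hmem : z ∈ Icc (0:ℝ) u := ⟨hz.1, hz.2.trans (le_of_lt hu)⟩
      rw [indicator_of_mem hmem]
    · rw [indicator_of_notMem hz]
      rcases lt_or_ge z 0 with h0 | h0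
      · apply tendsto_const_nhds.congr'
        filter_upwards with u
        rw [indicator_of_notMem (fun hzu => absurd hzu.1 (not_le.2 h0))]
      · have hzy : y < z := lt_of_not_ge fun h => hz ⟨h0, h⟩
        apply tendsto_const_nhds.congr'
        filter_upwards [Ioo_mem_nhdsGT hzy] with u hu
        rw [indicator_of_notMem (fun hzu => absurd hzu.2 (not_le.2 hu.2))]
  -- pointwise indicator convergence, left limit at y₁
  have hptwL : ∀ z : ℝ, Tendsto (fun u => (Icc (0:ℝ) u).indicator φ z) (𝓝[<] y₁)
      (𝓝 ((Ico (0:ℝ) y₁).indicator φ z)) := by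
    intro z
    by_cases hz : z ∈ Ico (0:ℝ) y₁
    · rw [indicator_of_mem hz]
      apply tendsto_const_nhds.congr'
      filter_upwards [Ioo_mem_nhdsLT hz.2] with u hu
      have hmem : z ∈ Icc (0:ℝ) u := ⟨hz.1, le_of_lt hu.1⟩
      rw [indicator_of_mem hmem]
    · rw [indicator_of_notMem hz]
      rcases lt_or_ge z 0 with h0 | h0
      · apply tendsto_const_nhds.congr'
        filter_upwards with u
        rw [indicator_of_notMem (fun hzu => absurd hzu.1 (not_le.2 h0))]
      · have hzy : y₁ ≤ z := le_of_not_gt fun h => hz ⟨h0, h⟩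
        apply tendsto_const_nhds.congr'
        filter_upwards [self_mem_nhdsWithin] with u hu
        rw [indicator_of_notMem (fun hzu => absurd hzu.2 (not_le.2 (lt_of_lt_of_le hu hzy)))]
  -- φ agrees with a nice function on [0, ∞)
  have hφeq : ∀ u : ℝ, 0 ≤ u → φ u = 1 - ψlam * u + lam * ∫ t in (0:ℝ)..u, g t := by
    intro u hu
    have h3 : (∫ t in (0:ℝ)..u, g t) = (∫ t in (0:ℝ)..u, ∫ z in Icc (0:ℝ) t, fN z ∂mhat)
        - ψlam * ∫ t in (0:ℝ)..u, ∫ z in Icc (0:ℝ) t, fD z ∂mhat := by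
      rw [← intervalIntegral.integral_const_mul,
        ← intervalIntegral.integral_sub (hNII 0 u) ((hDII 0 u).const_mul ψlam)]
      exact intervalIntegral.integral_congr fun t _ => hgsum t
    rw [hφ u, hfN u hu, hfD u hu, h3]
    ring
  -- the right derivative of φ
  have hderiv : ∀ y : ℝ, 0 ≤ y → HasDerivWithinAt φ (-ψlam + lam * g y) (Ioi y) y := by
    intro y hy
    have hcont : ContinuousWithinAt g (Ioi y) y :=
      tendsto_setIntegral_aux hUφ measurableSet_Icc (hptwR y)
    have hFTC : HasDerivWithinAt (fun u => ∫ t in (0:ℝ)..u, g t) (g y) (Ici y) y :=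
      intervalIntegral.integral_hasDerivWithinAt_right (hgII 0 y)
        ⟨univ, univ_mem, hgmeas.aestronglyMeasurable.restrict⟩ hcont
    have hlin : HasDerivWithinAt (fun u : ℝ => 1 - ψlam * u) (-ψlam) (Ici y) y := by
      simpa using (((hasDerivAt_id y).const_mul ψlam).const_sub (1:ℝ)).hasDerivWithinAt
    have hsum := hlin.add (hFTC.const_mul lam)
    refine (hsum.mono Ioi_subset_Ici_self).congr ?_ ?_
    · intro u hu
      exact hφeq u (le_of_lt (lt_of_le_of_lt hy hu))
    · exact hφeq y hy
  -- φ' agrees with the formula near y₁ from the left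
  have hval : ∀ᶠ y in 𝓝[<] y₁, φ' y = -ψlam + lam * g y := by
    filter_upwards [Ioo_mem_nhdsLT hy₁] with y hy
    have h1 := (hφ'd y hy.1.le).derivWithin (uniqueDiffWithinAt_Ioi y)
    have h2 := (hderiv y hy.1.le).derivWithin (uniqueDiffWithinAt_Ioi y)
    rw [← h1, ← h2]
  -- splitting the integral over [0, y₁]
  have hsplit : (∫ z in Icc (0:ℝ) y₁, φ z ∂mhat)
      = (∫ z in Ico (0:ℝ) y₁, φ z ∂mhat) + m₁ * φ y₁ := by
    have hdis : Disjoint (Ico (0:ℝ) y₁) {y₁} := by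
      simp [disjoint_singleton_right]
    have hun : Ico (0:ℝ) y₁ ∪ {y₁} = Icc (0:ℝ) y₁ := Ico_union_right hy₁.le
    rw [← hun, setIntegral_union hdis (measurableSet_singleton y₁)
      ((hintφ y₁).mono_set (fun z hz => ⟨hz.1, hz.2.le⟩))
      ((hintφ y₁).mono_set (by simp [singleton_subset_iff, hy₁.le]))]
    rw [integral_singleton, hm₁, smul_eq_mul]
    rfl
  -- conclusion
  have hlim : Tendsto (fun y => -ψlam + lam * g y) (𝓝[<] y₁)
      (𝓝 (-ψlam + lam * ∫ z in Ico (0:ℝ) y₁, φ z ∂mhat)) :=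
    tendsto_const_nhds.add ((tendsto_setIntegral_aux hUφ measurableSet_Ico hptwL).const_mul lam)
  have hfinal : -ψlam + lam * (∫ z in Ico (0:ℝ) y₁, φ z ∂mhat) = -(lam * m₁ * φ y₁) := by
    have : (∫ z in Ico (0:ℝ) y₁, φ z ∂mhat)
        = (∫ z in Icc (0:ℝ) y₁, φ z ∂mhat) - m₁ * φ y₁ := by linarith [hsplit]
    rw [this]
    have := part1
    ring_nf
    linarith [part1]
  rw [← hfinal]
  exact hlim.congr' (hval.mono fun y hy => hy.symm)
end
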